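/- Let m + 1 be even, and suppose K_n (n ≥ m + 1 ≥ 6) has an edge coloring with at least 3 colors in which the vertices of an (m+1)-cycle v_1 … v_{m+1} split into two cliques on the odd-indexed and even-indexed vertices, each of size (m+1)/2, with all edges within each clique colored t and all edges between the cliques colored with colors different from t, and these are the only color-t edges of K_n. Then K_n contains an m-cycle that misses some color: either a color w ≠ t has two disjoint edges, giving an m-cycle with colors only in {t, w}, contradicting 3-color coverage, or all color-w edges share a vertex x, and some m-cycle through x avoids color w. -/

import Mathlib

lemma path_of_chain {V : Type*} {R : V → V → Prop} (y : V) :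
    ∀ (x : V) (l : List V), (x :: (l ++ [y])).Nodup → List.Chain R x (l ++ [y]) →
    ∃ p : (⊤ : SimpleGraph V).Walk x y,
      p.support = x :: (l ++ [y]) ∧ p.length = l.length + 1 ∧
      (∀ e ∈ p.edges, ∃ u v, R u v ∧ e = s(u, v)) ∧
      (∀ e ∈ p.edges, x ∈ e → ∃ u, (l ++ [y]).head? = some u ∧ e = s(x, u)) := by
  intro x l
  induction l generalizing x with
  | nil =>
    intro hnd hch
    simp only [List.nil_append, List.chain_cons] at hch
    have hxy : x ≠ y := by simp at hnd; tauto
    refine ⟨SimpleGraph.Walk.cons (by simp [hxy]) SimpleGraph.Walk.nil, by simp, by simp, ?_, ?_⟩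
    · intro e he
      simp only [SimpleGraph.Walk.edges_cons, SimpleGraph.Walk.edges_nil, List.mem_singleton] at he
      exact ⟨x, y, List.isChain_pair.mp hch, he⟩
    · intro e he _
      simp only [SimpleGraph.Walk.edges_cons, SimpleGraph.Walk.edges_nil, List.mem_singleton] at he
      exact ⟨y, rfl, he⟩
  | cons z l ih =>
    intro hnd hch
    simp only [List.cons_append, List.chain_cons] at hch
    have hnd' : (z :: (l ++ [y])).Nodup := by
      simp only [List.cons_append, List.nodup_cons] at hnd ⊢; tauto
    have hxz : x ≠ z := by
      simp only [List.cons_append, List.nodup_cons, List.mem_cons] at hnd; tauto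
    obtain ⟨p, hsup, hlen, hedge, hfst⟩ := ih z hnd' (List.isChain_cons_cons.mp hch).2
    refine ⟨SimpleGraph.Walk.cons (by simp [hxz]) p, by simp [hsup], by simp [hlen], ?_, ?_⟩
    · intro e he
      simp only [SimpleGraph.Walk.edges_cons, List.mem_cons] at he
      rcases he with rfl | he
      · exact ⟨x, z, (List.isChain_cons_cons.mp hch).1, rfl⟩
      · exact hedge e he
    · intro e he hx
      simp only [SimpleGraph.Walk.edges_cons, List.mem_cons] at he
      rcases he with rfl | he
      · exact ⟨z, by simp, rfl⟩
      · exfalso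
        have hxs : x ∈ p.support := by
          induction e with
          | _ u v =>
            rcases Sym2.mem_iff.mp hx with rfl | rfl
            · exact p.fst_mem_support_of_mem_edges he
            · exact p.snd_mem_support_of_mem_edges he
        rw [hsup] at hxs
        simp only [List.cons_append, List.nodup_cons] at hnd
        exact hnd.1 (by simpa using hxs)

lemma cycle_of_chain {V : Type*} {R : V → V → Prop} (x : V) (l : List V)
    (hnd : (x :: l).Nodup) (hlen : 2 ≤ l.length) (hch : List.Chain R x (l ++ [x])) :
    ∃ c : (⊤ : SimpleGraph V).Walk x x, c.IsCycle ∧ c.length = l.length + 1 ∧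
      ∀ e ∈ c.edges, ∃ u v, R u v ∧ e = s(u, v) := by
  obtain ⟨h, w, l'', rfl⟩ : ∃ h w l'', l = h :: w :: l'' := by
    match l, hlen with
    | a :: b :: l'', _ => exact ⟨a, b, l'', rfl⟩
  simp only [List.cons_append, List.chain_cons] at hch
  have hxh : x ≠ h := by simp only [List.nodup_cons, List.mem_cons] at hnd; tauto
  have hnd' : (h :: ((w :: l'') ++ [x])).Nodup := by
    have : (h :: ((w :: l'') ++ [x])) = ((h :: w :: l'') ++ [x]) := rfl
    rw [this]
    exact ((List.perm_append_singleton _ _).nodup_iff).mpr hnd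
  obtain ⟨p, hsup, hlenp, hedge, hfst⟩ := path_of_chain x h (w :: l'') hnd' (List.isChain_cons_cons.mp hch).2
  have hpath : p.IsPath := by rw [SimpleGraph.Walk.isPath_def, hsup]; exact hnd'
  have hnotin : s(x, h) ∉ p.edges := by
    intro hmem
    obtain ⟨u, hu, he⟩ := hfst _ hmem (by simp)
    simp only [List.cons_append, List.head?_cons, Option.some.injEq] at hu
    subst hu
    rw [Sym2.eq_iff] at he
    have hxw : x = w := by tauto
    simp [hxw] at hnd
  refine ⟨SimpleGraph.Walk.cons (by simp [hxh]) p,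
    (SimpleGraph.Walk.cons_isCycle_iff p _).mpr ⟨hpath, ?_⟩, by simp [hlenp], ?_⟩
  · exact hnotin
  · intro e he
    simp only [SimpleGraph.Walk.edges_cons, List.mem_cons] at he
    rcases he with rfl | he
    · exact ⟨x, h, (List.isChain_cons_cons.mp hch).1, rfl⟩
    · exact hedge e he

lemma construct {n m : ℕ} (r : ℕ) (hr : 3 ≤ r) (hm : m = 2 * r - 1)
    (φ : Sym2 (Fin n) → ℕ) (t z : ℕ) (hzt : z ≠ t)
    (P Q : Finset (Fin n)) (hdisj : Disjoint P Q)
    (hPcard : P.card = r) (hQcard : Q.card = r)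
    (hP : ∀ x ∈ P, ∀ y ∈ P, x ≠ y → φ s(x, y) = t)
    (hQ : ∀ x ∈ Q, ∀ y ∈ Q, x ≠ y → φ s(x, y) = t)
    (p p' q q' : Fin n) (hp : p ∈ P) (hp' : p' ∈ P) (hpp : p ≠ p')
    (hq : q ∈ Q) (hq' : q' ∈ Q) (hqq : q ≠ q')
    (h1 : φ s(p', q') ≠ z) (h2 : φ s(p, q) ≠ z) :
    ∃ c : (⊤ : SimpleGraph (Fin n)).Walk p p, c.IsCycle ∧ c.length = m ∧
      ∀ e ∈ c.edges, φ e ≠ z := by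
  classical
  set R : Fin n → Fin n → Prop := fun u v => φ s(u, v) ≠ z with hR
  set A : List (Fin n) := (P.toList.erase p).erase p' with hA
  set B : List (Fin n) := ((Q.toList.erase q').erase q).take (r - 3) with hB
  -- facts about A
  have hPnd : P.toList.Nodup := P.nodup_toList
  have hQnd : Q.toList.Nodup := Q.nodup_toList
  have hAnd : A.Nodup := (hPnd.erase p).erase p'
  have hAsub : ∀ a ∈ A, a ∈ P := fun a ha => by
    simpa [Finset.mem_toList] using List.mem_of_mem_erase (List.mem_of_mem_erase ha)
  have hpA : p ∉ A := fun h => hPnd.not_mem_erase (List.mem_of_mem_erase h)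
  have hp'A : p' ∉ A := fun h => (hPnd.erase p).not_mem_erase h
  have hAlen : A.length = r - 2 := by
    have h1' : p ∈ P.toList := by simpa [Finset.mem_toList] using hp
    have h2' : p' ∈ P.toList.erase p := by
      rw [hPnd.mem_erase_iff]; exact ⟨hpp.symm, by simpa [Finset.mem_toList] using hp'⟩
    rw [hA, List.length_erase_of_mem h2', List.length_erase_of_mem h1',
      Finset.length_toList, hPcard]
    omega
  -- facts about B
  have hBnd : B.Nodup := (List.take_sublist _ _).nodup ((hQnd.erase q').erase q)
  have hBsub : ∀ a ∈ B, a ∈ Q := fun a ha => by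
    simpa [Finset.mem_toList] using
      List.mem_of_mem_erase (List.mem_of_mem_erase (List.mem_of_mem_take ha))
  have hqB : q ∉ B := fun h => ((hQnd.erase q').not_mem_erase) (List.mem_of_mem_take h)
  have hq'B : q' ∉ B := fun h => hQnd.not_mem_erase
    (List.mem_of_mem_erase (List.mem_of_mem_take h))
  have hBlen : B.length = r - 3 := by
    have h1' : q' ∈ Q.toList := by simpa [Finset.mem_toList] using hq'
    have h2' : q ∈ Q.toList.erase q' := by
      rw [hQnd.mem_erase_iff]; exact ⟨hqq, by simpa [Finset.mem_toList] using hq⟩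
    rw [hB, List.length_take, List.length_erase_of_mem h2', List.length_erase_of_mem h1',
      Finset.length_toList, hQcard]
    omega
  -- the two halves
  set PL : List (Fin n) := p :: (A ++ [p']) with hPL
  set QL : List (Fin n) := q' :: (B ++ [q]) with hQL
  have hPLsub : ∀ a ∈ PL, a ∈ P := by
    intro a ha
    rcases (by simpa [hPL] using ha : a = p ∨ a ∈ A ∨ a = p') with rfl | h | rfl
    · exact hp
    · exact hAsub a h
    · exact hp'
  have hQLsub : ∀ a ∈ QL, a ∈ Q := by
    intro a ha
    rcases (by simpa [hQL] using ha : a = q' ∨ a ∈ B ∨ a = q) with rfl | h | rfl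
    · exact hq'
    · exact hBsub a h
    · exact hq
  have hPLnd : PL.Nodup := by
    simp only [hPL, List.nodup_cons, List.nodup_append, List.nodup_singleton,
      List.mem_append, List.mem_singleton]
    refine ⟨by push_neg; exact ⟨hpA, hpp⟩, hAnd, ⟨by simp, by simp⟩, fun a ha b hb hab => hp'A (by subst hb; subst hab; exact ha)⟩
  have hQLnd : QL.Nodup := by
    simp only [hQL, List.nodup_cons, List.nodup_append, List.nodup_singleton,
      List.mem_append, List.mem_singleton]
    refine ⟨by push_neg; exact ⟨hq'B, hqq.symm⟩, hBnd, ⟨by simp, by simp⟩, fun a ha b hb hab => hqB (by subst hb; subst hab; exact ha)⟩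
  have hPQdisj : ∀ a ∈ PL, a ∉ QL := fun a ha hb =>
    Finset.disjoint_left.mp hdisj (hPLsub a ha) (hQLsub a hb)
  -- the full list
  have hnd : (PL ++ QL).Nodup := by
    rw [List.nodup_append]
    exact ⟨hPLnd, hQLnd, fun a ha b hb hab => hPQdisj a ha (hab ▸ hb)⟩
  -- Pairwise chains inside each clique
  have hchP : List.Chain' R PL := by
    apply List.Pairwise.isChain
    apply hPLnd.imp_of_mem
    intro a b ha hb hne
    show φ s(a, b) ≠ z
    rw [hP a (hPLsub a ha) b (hPLsub b hb) hne]
    exact fun hh => hzt hh.symm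
  have hchQ : List.Chain' R QL := by
    apply List.Pairwise.isChain
    apply hQLnd.imp_of_mem
    intro a b ha hb hne
    show φ s(a, b) ≠ z
    rw [hQ a (hQLsub a ha) b (hQLsub b hb) hne]
    exact fun hh => hzt hh.symm
  -- the full chain
  have hch : List.Chain' R (PL ++ (QL ++ [p])) := by
    rw [List.Chain', List.isChain_append]
    refine ⟨hchP, ?_, ?_⟩
    · rw [List.isChain_append]
      refine ⟨hchQ, List.isChain_singleton p, ?_⟩
      intro a ha b hb
      have ha' : a = q := by
        have : (q' :: (B ++ [q])).getLast? = some q := by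
          rw [show q' :: (B ++ [q]) = (q' :: B) ++ [q] by simp, List.getLast?_concat]
        rw [hQL, this] at ha; exact (Option.some_inj.mp (Option.mem_def.mp ha)).symm
      have hb' : b = p := by rw [List.head?_cons] at hb; exact (Option.some_inj.mp (Option.mem_def.mp hb)).symm
      rw [ha', hb']
      show φ s(q, p) ≠ z
      rw [Sym2.eq_swap]; exact h2
    · intro a ha b hb
      have ha' : a = p' := by
        have : (p :: (A ++ [p'])).getLast? = some p' := by
          rw [show p :: (A ++ [p']) = (p :: A) ++ [p'] by simp, List.getLast?_concat]
        rw [hPL, this] at ha; exact (Option.some_inj.mp (Option.mem_def.mp ha)).symm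
      have hb' : b = q' := by
        rw [hQL] at hb; simp at hb; exact hb.symm
      rw [ha', hb']
      exact h1
  -- invoke the cycle lemma
  have hlist : PL ++ (QL ++ [p]) = p :: ((A ++ [p'] ++ QL) ++ [p]) := by
    simp [hPL]
  have hnd' : (p :: (A ++ [p'] ++ QL)).Nodup := by
    have : p :: (A ++ [p'] ++ QL) = PL ++ QL := by simp [hPL]
    rw [this]; exact hnd
  have hLlen : (A ++ [p'] ++ QL).length = 2 * r - 2 := by
    rw [hQL]
    simp only [List.length_append, List.length_cons, List.length_nil]
    rw [hAlen, hBlen]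
    omega
  have hlen : 2 ≤ (A ++ [p'] ++ QL).length := by omega
  have hch' : List.Chain R p ((A ++ [p'] ++ QL) ++ [p]) := by
    have := hch
    rw [hlist] at this
    exact this
  obtain ⟨c, hc1, hc2, hc3⟩ := cycle_of_chain p (A ++ [p'] ++ QL) hnd' hlen hch'
  refine ⟨c, hc1, ?_, ?_⟩
  · rw [hc2, hLlen]; omega
  · intro e he
    obtain ⟨u, v, huv, rfl⟩ := hc3 e he
    exact huv

/-- Key case analysis: suppose `K_n` (`n ≥ m + 1`, `m + 1 ≥ 6` even) is colored with at
least 3 colors so that the color-`t` edges are exactly the edges inside two disjoint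
cliques `P`, `Q`, each of `(m+1)/2` vertices, and all `P`–`Q` edges avoid color `t`.
Then some `m`-cycle misses one of the colors present in the coloring. -/
theorem stmt_19 (n m : ℕ) (hm : 5 ≤ m) (heven : Even (m + 1)) (hn : m + 1 ≤ n)
    (φ : Sym2 (Fin n) → ℕ) (t : ℕ)
    (hcolors : ∃ c1 c2 c3 : ℕ, c1 ≠ c2 ∧ c1 ≠ c3 ∧ c2 ≠ c3 ∧
      (∃ e : Sym2 (Fin n), ¬ e.IsDiag ∧ φ e = c1) ∧
      (∃ e : Sym2 (Fin n), ¬ e.IsDiag ∧ φ e = c2) ∧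
      (∃ e : Sym2 (Fin n), ¬ e.IsDiag ∧ φ e = c3))
    (P Q : Finset (Fin n)) (hdisj : Disjoint P Q)
    (hPcard : P.card = (m + 1) / 2) (hQcard : Q.card = (m + 1) / 2)
    (hP : ∀ x ∈ P, ∀ y ∈ P, x ≠ y → φ s(x, y) = t)
    (hQ : ∀ x ∈ Q, ∀ y ∈ Q, x ≠ y → φ s(x, y) = t)
    (hPQ : ∀ x ∈ P, ∀ y ∈ Q, φ s(x, y) ≠ t)
    (honly : ∀ x y : Fin n, x ≠ y → φ s(x, y) = t →
      (x ∈ P ∧ y ∈ P) ∨ (x ∈ Q ∧ y ∈ Q)) :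
    ∃ (v : Fin n) (c : (⊤ : SimpleGraph (Fin n)).Walk v v),
      c.IsCycle ∧ c.length = m ∧
      ∃ w : ℕ, (∃ e : Sym2 (Fin n), ¬ e.IsDiag ∧ φ e = w) ∧
        ∀ e ∈ c.edges, φ e ≠ w := by
  classical
  obtain ⟨r, hr⟩ := heven
  have hk : (m + 1) / 2 = r := by omega
  have hr3 : 3 ≤ r := by omega
  have hm' : m = 2 * r - 1 := by omega
  rw [hk] at hPcard hQcard
  obtain ⟨c1, c2, c3, h12, h13, h23, w1, w2, w3⟩ := hcolors
  -- three distinct vertices in each of P, Q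
  obtain ⟨P3, hP3sub, hP3card⟩ := Finset.exists_subset_card_eq (show 3 ≤ P.card by omega)
  rw [Finset.card_eq_three] at hP3card
  obtain ⟨p1, p2, p3, hp12, hp13, hp23, rfl⟩ := hP3card
  obtain ⟨Q3, hQ3sub, hQ3card⟩ := Finset.exists_subset_card_eq (show 3 ≤ Q.card by omega)
  rw [Finset.card_eq_three] at hQ3card
  obtain ⟨q1, q2, q3, hq12, hq13, hq23, rfl⟩ := hQ3card
  have hp1 : p1 ∈ P := hP3sub (by simp)
  have hp2 : p2 ∈ P := hP3sub (by simp)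
  have hp3 : p3 ∈ P := hP3sub (by simp)
  have hq1 : q1 ∈ Q := hQ3sub (by simp)
  have hq2 : q2 ∈ Q := hQ3sub (by simp)
  have hq3 : q3 ∈ Q := hQ3sub (by simp)
  set a1 := φ s(p1, q1) with ha1
  set a2 := φ s(p2, q2) with ha2
  set a3 := φ s(p3, q3) with ha3
  have ha1t : a1 ≠ t := hPQ p1 hp1 q1 hq1
  have ha2t : a2 ≠ t := hPQ p2 hp2 q2 hq2
  have ha3t : a3 ≠ t := hPQ p3 hp3 q3 hq3
  -- picker for a missed color among c1 c2 c3
  have pick : ∀ a : ℕ, ∃ z, (∃ e : Sym2 (Fin n), ¬ e.IsDiag ∧ φ e = z) ∧ z ≠ t ∧ z ≠ a := by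
    intro a
    have hcase : (c1 ≠ t ∧ c1 ≠ a) ∨ (c2 ≠ t ∧ c2 ≠ a) ∨ (c3 ≠ t ∧ c3 ≠ a) := by
      rcases eq_or_ne c1 t with h1t | h1t
      · rcases eq_or_ne c2 a with h2a | h2a
        · exact Or.inr (Or.inr ⟨fun h => h13 (h1t.trans h.symm), fun h => h23 (h2a.trans h.symm)⟩)
        · exact Or.inr (Or.inl ⟨fun h => h12 (h1t.trans h.symm), h2a⟩)
      · rcases eq_or_ne c1 a with h1a | h1a
        · rcases eq_or_ne c2 t with h2t | h2t
          · exact Or.inr (Or.inr ⟨fun h => h23 (h2t.trans h.symm), fun h => h13 (h1a.trans h.symm)⟩)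
          · exact Or.inr (Or.inl ⟨h2t, fun h => h12 (h1a.trans h.symm)⟩)
        · exact Or.inl ⟨h1t, h1a⟩
    rcases hcase with h | h | h
    · exact ⟨c1, w1, h⟩
    · exact ⟨c2, w2, h⟩
    · exact ⟨c3, w3, h⟩
  by_cases hc12 : a1 = a2
  · obtain ⟨z, hw, hzt, hza⟩ := pick a1
    obtain ⟨c, hc1', hc2', hc3'⟩ := construct r hr3 hm' φ t z hzt P Q hdisj hPcard hQcard
      hP hQ p1 p2 q1 q2 hp1 hp2 hp12 hq1 hq2 hq12
      (by rw [← ha2, ← hc12]; exact fun h => hza h.symm) (fun h => hza ((ha1 ▸ h).symm))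
    exact ⟨p1, c, hc1', hc2', z, hw, hc3'⟩
  · by_cases hc13 : a1 = a3
    · obtain ⟨z, hw, hzt, hza⟩ := pick a1
      obtain ⟨c, hc1', hc2', hc3'⟩ := construct r hr3 hm' φ t z hzt P Q hdisj hPcard hQcard
        hP hQ p1 p3 q1 q3 hp1 hp3 hp13 hq1 hq3 hq13
        (by rw [← ha3, ← hc13]; exact fun h => hza h.symm) (fun h => hza ((ha1 ▸ h).symm))
      exact ⟨p1, c, hc1', hc2', z, hw, hc3'⟩
    · by_cases hc23 : a2 = a3
      · obtain ⟨z, hw, hzt, hza⟩ := pick a2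
        obtain ⟨c, hc1', hc2', hc3'⟩ := construct r hr3 hm' φ t z hzt P Q hdisj hPcard hQcard
          hP hQ p2 p3 q2 q3 hp2 hp3 hp23 hq2 hq3 hq23
          (by rw [← ha3, ← hc23]; exact fun h => hza h.symm) (fun h => hza ((ha2 ▸ h).symm))
        exact ⟨p2, c, hc1', hc2', z, hw, hc3'⟩
      · -- all three crossing colors distinct; miss a1
        have hw : ∃ e : Sym2 (Fin n), ¬ e.IsDiag ∧ φ e = a1 := by
          refine ⟨s(p1, q1), ?_, ha1.symm⟩
          rw [Sym2.mk_isDiag_iff]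
          exact fun h => Finset.disjoint_left.mp hdisj hp1 (h ▸ hq1)
        obtain ⟨c, hc1', hc2', hc3'⟩ := construct r hr3 hm' φ t a1 ha1t P Q hdisj hPcard hQcard
          hP hQ p2 p3 q2 q3 hp2 hp3 hp23 hq2 hq3 hq23
          (fun h => hc13 ((ha3 ▸ h).symm)) (fun h => hc12 ((ha2 ▸ h).symm))
        exact ⟨p2, c, hc1', hc2', a1, hw, hc3'⟩
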